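/- Let K be a number field of degree m over ℚ with ring of integers 𝓞_K, let R be a finite subset of SL₂(K), and let β' ∈ 𝓞_K be nonzero such that β'·γ has all four entries in 𝓞_K for every γ ∈ R and every γ⁻¹ with γ ∈ R. Let C₁ ≥ 1 be a real number bounding |σ(a)| for every entry a of every γ ∈ R and every γ⁻¹ (γ ∈ R) and every embedding σ : K → ℂ, and let C₂ = max over embeddings σ of |σ(β')|. Then for every ω ∈ SL₂(K) that is a product of k ≥ 1 matrices from R or inverses of matrices of R, there exist α, β ∈ 𝓞_K with β ≠ 0 such that tr(ω) = α/β and both |N_{K/ℚ}(α + 2β)| ≤ (2·(2C₁C₂)^{k})^{m} and |N_{K/ℚ}(α − 2β)| ≤ (2·(2C₁C₂)^{k})^{m}. -/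

import Mathlib

open NumberField

private lemma aux_abs_norm (K : Type*) [Field K] [NumberField K] (x : K) :
    |((Algebra.norm ℚ x : ℚ) : ℝ)| = ∏ σ : K →+* ℂ, ‖σ x‖ := by
  have h := congr_arg (norm : ℂ → ℝ) (Algebra.norm_eq_prod_embeddings ℚ ℂ x)
  rw [norm_prod] at h
  have h2 : ∏ σ : K →+* ℂ, ‖σ x‖ = ∏ ψ : K →ₐ[ℚ] ℂ, ‖ψ x‖ :=
    Fintype.prod_equiv (RingHom.equivRatAlgHom K ℂ) _ _
      (fun σ => by simp [RingHom.equivRatAlgHom_apply])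
  rw [h2, ← h, eq_ratCast]
  simp [← Complex.ofReal_ratCast, Complex.norm_real, Real.norm_eq_abs]
  rw [← Rat.norm_cast_real, Real.norm_eq_abs]

private lemma aux_int {K : Type*} [Field K] (b : K) :
    ∀ (g : List (Matrix (Fin 2) (Fin 2) K)),
    (∀ A ∈ g, ∀ p q, IsIntegral ℤ (b * A p q)) →
    ∀ p q, IsIntegral ℤ (b ^ g.length * g.prod p q)
  | [], _, p, q => by
      simp only [List.prod_nil, List.length_nil, pow_zero, one_mul, Matrix.one_apply]
      split
      · exact isIntegral_one
      · exact isIntegral_zero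
  | A :: g, h, p, q => by
      have ih := aux_int b g (fun B hB => h B (List.mem_cons_of_mem _ hB))
      simp only [List.prod_cons, List.length_cons, Matrix.mul_apply]
      rw [Finset.mul_sum]
      apply IsIntegral.sum
      intro r _
      have e : b ^ (g.length + 1) * (A p r * g.prod r q)
           = (b * A p r) * (b ^ g.length * g.prod r q) := by ring
      rw [e]
      exact (h A (List.mem_cons_self) p r).mul (ih r q)

private lemma aux_bd {K : Type*} [Field K] (C₁ : ℝ) (hC₁ : 1 ≤ C₁) :
    ∀ (g : List (Matrix (Fin 2) (Fin 2) K)),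
    (∀ A ∈ g, ∀ (p q : Fin 2) (σ : K →+* ℂ), ‖σ (A p q)‖ ≤ C₁) →
    g ≠ [] → ∀ (p q : Fin 2) (σ : K →+* ℂ),
      ‖σ (g.prod p q)‖ ≤ 2 ^ (g.length - 1) * C₁ ^ g.length
  | [], _, hne => absurd rfl hne
  | [A], h, _ => by
      intro p q σ
      simpa using h A (List.mem_singleton.mpr rfl) p q σ
  | A :: B :: g, h, _ => by
      intro p q σ
      have ih := aux_bd C₁ hC₁ (B :: g) (fun M hM => h M (List.mem_cons_of_mem _ hM)) (by simp)
      have hA := fun r => h A (List.mem_cons_self) p r σ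
      set n := (B :: g).length with hn
      have hn1 : 1 ≤ n := by simp [hn]
      have hbd2 : ∀ r : Fin 2, ‖σ (A p r * (B :: g).prod r q)‖ ≤
          C₁ * (2 ^ (n - 1) * C₁ ^ n) := by
        intro r
        rw [map_mul, norm_mul]
        exact mul_le_mul (hA r) (ih r q σ) (norm_nonneg _) (le_trans zero_le_one hC₁)
      have hsum : ‖σ (((A :: B :: g).prod) p q)‖ ≤
          ∑ r : Fin 2, ‖σ (A p r * (B :: g).prod r q)‖ := by
        rw [List.prod_cons, Matrix.mul_apply, map_sum]
        exact norm_sum_le _ _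
      have hlen : (A :: B :: g).length = n + 1 := by simp [hn]
      rw [hlen]
      have h2 : (2:ℝ) ^ (n + 1 - 1) = 2 * 2 ^ (n - 1) := by
        rw [Nat.add_sub_cancel]
        conv_lhs => rw [show n = (n - 1) + 1 by omega]
        ring
      calc ‖σ (((A :: B :: g).prod) p q)‖
          ≤ ∑ r : Fin 2, ‖σ (A p r * (B :: g).prod r q)‖ := hsum
        _ ≤ ∑ _r : Fin 2, C₁ * (2 ^ (n - 1) * C₁ ^ n) :=
            Finset.sum_le_sum fun r _ => hbd2 r
        _ = 2 * (C₁ * (2 ^ (n - 1) * C₁ ^ n)) := by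
            rw [Fin.sum_univ_two]
            ring
        _ = 2 ^ (n + 1 - 1) * C₁ ^ (n + 1) := by rw [h2]; ring

theorem trace_eq_ratio_with_norm_bound
    (K : Type*) [Field K] [NumberField K]
    (m : ℕ) (hm : m = Module.finrank ℚ K)
    (R : Finset (Matrix.SpecialLinearGroup (Fin 2) K))
    (β' : 𝓞 K) (hβ' : β' ≠ 0)
    (hden : ∀ γ ∈ R, ∀ i j : Fin 2,
      IsIntegral ℤ (algebraMap (𝓞 K) K β' * (γ : Matrix (Fin 2) (Fin 2) K) i j) ∧
      IsIntegral ℤ (algebraMap (𝓞 K) K β' * (↑(γ⁻¹) : Matrix (Fin 2) (Fin 2) K) i j))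
    (C₁ : ℝ) (hC₁ : 1 ≤ C₁)
    (hC₁R : ∀ γ ∈ R, ∀ σ : K →+* ℂ, ∀ i j : Fin 2,
      ‖σ ((γ : Matrix (Fin 2) (Fin 2) K) i j)‖ ≤ C₁ ∧
      ‖σ ((↑(γ⁻¹) : Matrix (Fin 2) (Fin 2) K) i j)‖ ≤ C₁)
    (C₂ : ℝ) (hC₂ : ∀ σ : K →+* ℂ, ‖σ (algebraMap (𝓞 K) K β')‖ ≤ C₂)
    (k : ℕ) (hk : 1 ≤ k)
    (f : Fin k → Matrix.SpecialLinearGroup (Fin 2) K)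
    (hf : ∀ i, f i ∈ R ∨ (f i)⁻¹ ∈ R)
    (ω : Matrix.SpecialLinearGroup (Fin 2) K) (hω : ω = (List.ofFn f).prod) :
    ∃ α β : 𝓞 K, β ≠ 0 ∧
      Matrix.trace (ω : Matrix (Fin 2) (Fin 2) K) =
        algebraMap (𝓞 K) K α / algebraMap (𝓞 K) K β ∧
      |((Algebra.norm ℚ (algebraMap (𝓞 K) K (α + 2 * β)) : ℚ) : ℝ)| ≤
        (2 * (2 * C₁ * C₂) ^ k) ^ m ∧
      |((Algebra.norm ℚ (algebraMap (𝓞 K) K (α - 2 * β)) : ℚ) : ℝ)| ≤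
        (2 * (2 * C₁ * C₂) ^ k) ^ m := by
  set b : K := algebraMap (𝓞 K) K β' with hb
  have hbne : b ≠ 0 := fun h0 => hβ' (RingOfIntegers.coe_eq_zero_iff.mp h0)
  set tr : K := Matrix.trace (ω : Matrix (Fin 2) (Fin 2) K) with htrdef
  -- the list of underlying matrices
  set g : List (Matrix (Fin 2) (Fin 2) K) :=
    (List.ofFn f).map (fun A : Matrix.SpecialLinearGroup (Fin 2) K => (A : Matrix (Fin 2) (Fin 2) K)) with hg
  have hglen : g.length = k := by simp [hg]
  have hgne : g ≠ [] := by
    intro h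
    have := congr_arg List.length h
    rw [hglen] at this
    simp at this
    omega
  -- coe of ω is the product of g
  have hcoe : (ω : Matrix (Fin 2) (Fin 2) K) = g.prod := by
    rw [hω, hg]
    exact (List.prod_hom (List.ofFn f)
      ({ toFun := fun A => (A : Matrix (Fin 2) (Fin 2) K),
         map_one' := rfl, map_mul' := fun _ _ => rfl } :
         Matrix.SpecialLinearGroup (Fin 2) K →* Matrix (Fin 2) (Fin 2) K)).symm
  -- properties of members of g
  have hmem : ∀ A ∈ g, (∀ p q, IsIntegral ℤ (b * A p q)) ∧
      (∀ (p q : Fin 2) (σ : K →+* ℂ), ‖σ (A p q)‖ ≤ C₁) := by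
    intro A hA
    rw [hg, List.mem_map] at hA
    obtain ⟨γ, hγ, rfl⟩ := hA
    rw [List.mem_ofFn] at hγ
    obtain ⟨i, rfl⟩ := hγ
    rcases hf i with h | h
    · exact ⟨fun p q => (hden _ h p q).1, fun p q σ => (hC₁R _ h σ p q).1⟩
    · refine ⟨fun p q => ?_, fun p q σ => ?_⟩
      · have := (hden _ h p q).2
        rwa [inv_inv] at this
      · have := (hC₁R _ h σ p q).2
        rwa [inv_inv] at this
  have hint := aux_int b g (fun A hA => (hmem A hA).1)
  have hbd := aux_bd C₁ hC₁ g (fun A hA => (hmem A hA).2) hgne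
  rw [hglen] at hint hbd
  -- the candidate numerator is integral
  have hintα : IsIntegral ℤ (b ^ k * tr) := by
    rw [htrdef, Matrix.trace_fin_two, hcoe, mul_add]
    exact (hint 0 0).add (hint 1 1)
  -- nonnegativity facts
  obtain ⟨σ₀⟩ : Nonempty (K →+* ℂ) := inferInstance
  have hC₂nn : (0:ℝ) ≤ C₂ := le_trans (norm_nonneg _) (hC₂ σ₀)
  have hC₁nn : (0:ℝ) ≤ C₁ := le_trans zero_le_one hC₁
  -- the conjugate bounds
  have hσ : ∀ σ : K →+* ℂ,
      ‖σ (b ^ k * tr + 2 * b ^ k)‖ ≤ 2 * (2 * C₁ * C₂) ^ k ∧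
      ‖σ (b ^ k * tr - 2 * b ^ k)‖ ≤ 2 * (2 * C₁ * C₂) ^ k := by
    intro σ
    have htr : ‖σ tr‖ ≤ 2 ^ k * C₁ ^ k := by
      rw [htrdef, Matrix.trace_fin_two, hcoe, map_add]
      calc ‖σ (g.prod 0 0) + σ (g.prod 1 1)‖
          ≤ ‖σ (g.prod 0 0)‖ + ‖σ (g.prod 1 1)‖ :=
            norm_add_le _ _
        _ ≤ 2 ^ (k-1) * C₁ ^ k + 2 ^ (k-1) * C₁ ^ k := add_le_add (hbd 0 0 σ) (hbd 1 1 σ)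
        _ = 2 * 2 ^ (k-1) * C₁ ^ k := by ring
        _ = 2 ^ k * C₁ ^ k := by
            have hkk : (2:ℝ) * 2 ^ (k - 1) = 2 ^ k := by
              have h1 : k - 1 + 1 = k := by omega
              calc (2:ℝ) * 2 ^ (k - 1) = 2 ^ (k - 1 + 1) := (pow_succ' 2 _).symm
                _ = 2 ^ k := by rw [h1]
            rw [← hkk]
    have hbk : ‖σ (b ^ k)‖ ≤ C₂ ^ k := by
      rw [map_pow, norm_pow]
      exact pow_le_pow_left₀ (norm_nonneg _) (hC₂ σ) k
    have h2le : (2:ℝ) ≤ 2 ^ k * C₁ ^ k := by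
      have h1 : (2:ℝ) ^ 1 ≤ 2 ^ k := pow_le_pow_right₀ one_le_two hk
      have h2 : (1:ℝ) ≤ C₁ ^ k := by
        have := pow_le_pow_left₀ zero_le_one hC₁ k
        simpa using this
      nlinarith
    have key : ∀ t : ℂ, ‖t‖ ≤ 2 →
        ‖σ (b ^ k) * σ tr + t * σ (b ^ k)‖ ≤ 2 * (2 * C₁ * C₂) ^ k := by
      intro t ht
      have hbknn : (0:ℝ) ≤ ‖σ (b ^ k)‖ := norm_nonneg _
      calc ‖σ (b ^ k) * σ tr + t * σ (b ^ k)‖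
          ≤ ‖σ (b ^ k)‖ * ‖σ tr‖
            + ‖t‖ * ‖σ (b ^ k)‖ := by
            refine (norm_add_le _ _).trans ?_
            rw [norm_mul, norm_mul]
        _ ≤ C₂ ^ k * (2 ^ k * C₁ ^ k) + 2 * C₂ ^ k := by
            gcongr
        _ ≤ C₂ ^ k * (2 ^ k * C₁ ^ k) + (2 ^ k * C₁ ^ k) * C₂ ^ k := by
            gcongr
        _ = 2 * (2 * C₁ * C₂) ^ k := by
            rw [mul_pow, mul_pow]
            ring
    constructor
    · have := key (σ 2) (by simp [map_ofNat])
      rw [map_add, map_mul, map_mul]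
      exact this
    · have := key (-(σ 2)) (by simp [map_ofNat])
      rw [map_sub, map_mul, map_mul, sub_eq_add_neg, ← neg_mul]
      exact this
  -- the norm bound from the conjugate bounds
  have hBnn : (0:ℝ) ≤ 2 * (2 * C₁ * C₂) ^ k := by positivity
  have keynorm : ∀ x : K, (∀ σ : K →+* ℂ, ‖σ x‖ ≤ 2 * (2 * C₁ * C₂) ^ k) →
      |((Algebra.norm ℚ x : ℚ) : ℝ)| ≤ (2 * (2 * C₁ * C₂) ^ k) ^ m := by
    intro x hx
    rw [aux_abs_norm]
    calc ∏ σ : K →+* ℂ, ‖σ x‖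
        ≤ ∏ _σ : K →+* ℂ, (2 * (2 * C₁ * C₂) ^ k) :=
          Finset.prod_le_prod (fun _ _ => norm_nonneg _) (fun σ _ => hx σ)
      _ = (2 * (2 * C₁ * C₂) ^ k) ^ m := by
          rw [Finset.prod_const, Finset.card_univ, NumberField.Embeddings.card K ℂ, hm]
  refine ⟨⟨b ^ k * tr, (mem_integralClosure_iff ℤ K).mpr hintα⟩, β' ^ k, pow_ne_zero k hβ', ?_, ?_, ?_⟩
  · rw [RingOfIntegers.map_mk, map_pow, ← hb]
    exact (mul_div_cancel_left₀ _ (pow_ne_zero k hbne)).symm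
  · refine keynorm _ fun σ => ?_
    have e : algebraMap (𝓞 K) K (@HAdd.hAdd (𝓞 K) (𝓞 K) (𝓞 K) _ ⟨b ^ k * tr, (mem_integralClosure_iff ℤ K).mpr hintα⟩ (2 * β' ^ k))
        = b ^ k * tr + 2 * b ^ k := by
      exact (map_add (algebraMap (𝓞 K) K) _ _).trans
        (congrArg₂ (· + ·) rfl (by rw [map_mul, map_pow, ← hb, map_ofNat]))
    rw [e]
    exact (hσ σ).1
  · refine keynorm _ fun σ => ?_
    have e : algebraMap (𝓞 K) K (@HSub.hSub (𝓞 K) (𝓞 K) (𝓞 K) _ ⟨b ^ k * tr, (mem_integralClosure_iff ℤ K).mpr hintα⟩ (2 * β' ^ k))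
        = b ^ k * tr - 2 * b ^ k := by
      exact (map_sub (algebraMap (𝓞 K) K) _ _).trans
        (congrArg₂ (· - ·) rfl (by rw [map_mul, map_pow, ← hb, map_ofNat]))
    rw [e]
    exact (hσ σ).2
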